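/- Let G be a weighted undirected graph with nonnegative edge weights on vertex set V, and let Ĝ be G with two additional vertices s, t (with nonnegative weighted edges from s, t to V). Let C be a maximum cut of G, let Ĉ be a global maximum cut of Ĝ, let Ĉ_st be a maximum cut of Ĝ subject to separating s and t, and let Ĉ_st^G be the restriction of Ĉ_st to V. Then the cut value of C in G is at most the cut value of Ĉ_st^G in G plus d_s + d_t + min{d_s, d_t}, where d_s and d_t are the weighted degrees of s and t in Ĝ. -/

import Mathlib

open Finset

/-- Cut value of a vertex bipartition `σ` with respect to symmetric weights `w`. -/
noncomputable def cutVal {V : Type*} [Fintype V] (w : V → V → ℝ) (σ : V → Bool) : ℝ :=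
  (1 / 2) * ∑ a, ∑ b, if σ a ≠ σ b then w a b else 0

lemma cutVal_decomp (n : ℕ) (w : (Fin n ⊕ Bool) → (Fin n ⊕ Bool) → ℝ)
    (hsym : ∀ a b, w a b = w b a) (hnn : ∀ a b, 0 ≤ w a b)
    (σ : (Fin n ⊕ Bool) → Bool) (ds dt : ℝ)
    (hds : ds = ∑ x, w (Sum.inr false) x)
    (hdt : dt = ∑ x, w (Sum.inr true) x) :
    cutVal (fun u v => w (Sum.inl u) (Sum.inl v)) (fun u => σ (Sum.inl u)) ≤ cutVal w σ ∧
    cutVal w σ ≤ cutVal (fun u v => w (Sum.inl u) (Sum.inl v)) (fun u => σ (Sum.inl u))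
      + ds + dt := by
  set g : (Fin n ⊕ Bool) → (Fin n ⊕ Bool) → ℝ :=
    fun a b => if σ a ≠ σ b then w a b else 0 with hg
  have hg_nn : ∀ a b, 0 ≤ g a b := by
    intro a b; simp only [hg]; split
    · exact hnn _ _
    · exact le_rfl
  have hg_le : ∀ a b, g a b ≤ w a b := by
    intro a b; simp only [hg]; split
    · exact le_rfl
    · exact hnn _ _
  have hfull : cutVal w σ = (1 / 2) * ∑ a, ∑ b, g a b := rfl
  have hres : cutVal (fun u v => w (Sum.inl u) (Sum.inl v)) (fun u => σ (Sum.inl u))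
      = (1 / 2) * ∑ u, ∑ v, g (Sum.inl u) (Sum.inl v) := rfl
  have hS : (∑ a, ∑ b, g a b)
      = (∑ u, ∑ v, g (Sum.inl u) (Sum.inl v))
        + ((∑ u, ∑ c, g (Sum.inl u) (Sum.inr c))
          + ((∑ c, ∑ v, g (Sum.inr c) (Sum.inl v))
            + (∑ c, ∑ c', g (Sum.inr c) (Sum.inr c')))) := by
    rw [Fintype.sum_sum_type (fun a => ∑ b, g a b)]
    have e1 : ∀ a : Fin n ⊕ Bool, (∑ b, g a b)
        = (∑ v, g a (Sum.inl v)) + (∑ c', g a (Sum.inr c')) :=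
      fun a => Fintype.sum_sum_type _
    simp only [e1, Finset.sum_add_distrib]
    ring
  have hdsdt : ds + dt
      = (∑ c, ∑ v, w (Sum.inr c) (Sum.inl v)) + (∑ c, ∑ c', w (Sum.inr c) (Sum.inr c')) := by
    have e1 : ∀ c : Bool, (∑ x, w (Sum.inr c) x)
        = (∑ v, w (Sum.inr c) (Sum.inl v)) + (∑ c', w (Sum.inr c) (Sum.inr c')) :=
      fun c => Fintype.sum_sum_type _
    rw [hds, hdt, e1 false, e1 true]
    simp only [Fintype.sum_bool]
    ring
  have hB : (∑ u, ∑ c, g (Sum.inl u) (Sum.inr c)) ≤ ∑ c, ∑ v, w (Sum.inr c) (Sum.inl v) := by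
    rw [Finset.sum_comm]
    refine Finset.sum_le_sum fun c _ => Finset.sum_le_sum fun v _ => ?_
    calc g (Sum.inl v) (Sum.inr c) ≤ w (Sum.inl v) (Sum.inr c) := hg_le _ _
      _ = w (Sum.inr c) (Sum.inl v) := hsym _ _
  have hC2 : (∑ c, ∑ v, g (Sum.inr c) (Sum.inl v)) ≤ ∑ c, ∑ v, w (Sum.inr c) (Sum.inl v) :=
    Finset.sum_le_sum fun c _ => Finset.sum_le_sum fun v _ => hg_le _ _
  have hD : (∑ c, ∑ c', g (Sum.inr c) (Sum.inr c')) ≤ ∑ c, ∑ c', w (Sum.inr c) (Sum.inr c') :=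
    Finset.sum_le_sum fun c _ => Finset.sum_le_sum fun c' _ => hg_le _ _
  have hD2nn : 0 ≤ ∑ c, ∑ c', w (Sum.inr c) (Sum.inr c') :=
    Finset.sum_nonneg fun c _ => Finset.sum_nonneg fun c' _ => hnn _ _
  have hBnn : 0 ≤ ∑ u, ∑ c, g (Sum.inl u) (Sum.inr c) :=
    Finset.sum_nonneg fun _ _ => Finset.sum_nonneg fun _ _ => hg_nn _ _
  have hCnn : 0 ≤ ∑ c, ∑ v, g (Sum.inr c) (Sum.inl v) :=
    Finset.sum_nonneg fun _ _ => Finset.sum_nonneg fun _ _ => hg_nn _ _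
  have hDnn : 0 ≤ ∑ c, ∑ c', g (Sum.inr c) (Sum.inr c') :=
    Finset.sum_nonneg fun _ _ => Finset.sum_nonneg fun _ _ => hg_nn _ _
  rw [hfull, hres, hS]
  constructor <;> linarith

theorem maxcut_via_st (n : ℕ)
    (w : (Fin n ⊕ Bool) → (Fin n ⊕ Bool) → ℝ)
    (hsym : ∀ a b, w a b = w b a) (hnn : ∀ a b, 0 ≤ w a b)
    (hloop : ∀ a, w a a = 0)
    -- `Sum.inr false` plays the role of `s`, `Sum.inr true` plays the role of `t`.
    (C : Fin n → Bool)
    (hC : ∀ τ : Fin n → Bool,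
      cutVal (fun u v => w (Sum.inl u) (Sum.inl v)) τ
        ≤ cutVal (fun u v => w (Sum.inl u) (Sum.inl v)) C)
    (Chat : (Fin n ⊕ Bool) → Bool)
    (hChat : ∀ σ, cutVal w σ ≤ cutVal w Chat)
    (Cst : (Fin n ⊕ Bool) → Bool)
    (hCstSep : Cst (Sum.inr false) ≠ Cst (Sum.inr true))
    (hCst : ∀ σ : (Fin n ⊕ Bool) → Bool,
      σ (Sum.inr false) ≠ σ (Sum.inr true) → cutVal w σ ≤ cutVal w Cst)
    (ds dt : ℝ)
    (hds : ds = ∑ x, w (Sum.inr false) x)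
    (hdt : dt = ∑ x, w (Sum.inr true) x) :
    cutVal (fun u v => w (Sum.inl u) (Sum.inl v)) C
      ≤ cutVal (fun u v => w (Sum.inl u) (Sum.inl v)) (fun u => Cst (Sum.inl u))
        + ds + dt + min ds dt := by
  have hmin : 0 ≤ min ds dt := by
    refine le_min ?_ ?_
    · rw [hds]; exact Finset.sum_nonneg fun x _ => hnn _ _
    · rw [hdt]; exact Finset.sum_nonneg fun x _ => hnn _ _
  set σ₀ : (Fin n ⊕ Bool) → Bool := Sum.elim C id with hσ₀
  have h1 : cutVal (fun u v => w (Sum.inl u) (Sum.inl v)) C ≤ cutVal w σ₀ := by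
    have := (cutVal_decomp n w hsym hnn σ₀ ds dt hds hdt).1
    simpa [hσ₀] using this
  have h2 : cutVal w σ₀ ≤ cutVal w Cst := hCst σ₀ (by simp [hσ₀])
  have h3 := (cutVal_decomp n w hsym hnn Cst ds dt hds hdt).2
  linarith
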